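/- arXiv:2201.08756 — 3 statements merged into one kernel-verified Lean document; each statement's English description precedes it below -/
import Mathlib

section
/- Let y ∈ ℝⁿ with y ≠ 0, X an n×d real matrix, and let 𝒮 be a set of pairs (D, V) of positive semidefinite matrices of sizes d×d and n×n. For (D,V) ∈ 𝒮 write N(D,V) = X D Xᵀ + V, J(β; D, V) = (y − Xβ)ᵀ V† (y − Xβ) + βᵀ D† β + tr(N(D,V))/‖y‖₂², Θ(D,V) = {β : y − Xβ ∈ range(V), β ∈ range(D)}, W(D,V) = tr((y yᵀ − N(D,V))ᵀ N(D,V)† (y yᵀ − N(D,V))), and G(β) = inf{ J(β; D, V) : (D,V) ∈ 𝒮, β ∈ Θ(D,V) } (an extended-real infimum). Suppose (D*, V*) ∈ 𝒮 satisfies y ∈ range(N(D*,V*)) and W(D*,V*) ≤ W(D,V) for every (D,V) ∈ 𝒮 with y ∈ range(N(D,V)). Then β* = D* Xᵀ N(D*,V*)† y satisfies G(β*) ≤ G(β) for all β ∈ ℝᵈ. -/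
open Matrix

/-- The four Penrose conditions: `B` is the Moore–Penrose pseudoinverse of `A`. -/
def IsMoorePenrose {m n : Type*} [Fintype m] [Fintype n]
    (A : Matrix m n ℝ) (B : Matrix n m ℝ) : Prop :=
  A * B * A = A ∧ B * A * B = B ∧ (A * B)ᵀ = A * B ∧ (B * A)ᵀ = B * A

set_option linter.unusedSectionVars false
set_option maxHeartbeats 1000000

section Aux
variable {m k : Type*} [Fintype m] [Fintype k] [DecidableEq m] [DecidableEq k]


lemma mp_unique {A : Matrix m k ℝ} {B C : Matrix k m ℝ}
    (hB : IsMoorePenrose A B) (hC : IsMoorePenrose A C) : B = C := by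
  obtain ⟨hB1, hB2, hB3, hB4⟩ := hB
  obtain ⟨hC1, hC2, hC3, hC4⟩ := hC
  have hAB : A * B = A * C := by
    have h5 : A * B = (A * C) * (A * B) := by
      conv_lhs => rw [← hC1]
      simp only [Matrix.mul_assoc]
    have h6 : (A * C) * (A * B) = A * C := by
      calc (A * C) * (A * B) = (A * C)ᵀ * (A * B)ᵀ := by rw [hC3, hB3]
      _ = ((A * B) * (A * C))ᵀ := (transpose_mul _ _).symm
      _ = (A * C)ᵀ := by
          rw [show (A * B) * (A * C) = (A * B * A) * C by
            simp only [Matrix.mul_assoc], hB1]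
      _ = A * C := hC3
    rw [h5, h6]
  have hBA : B * A = C * A := by
    have h5 : B * A = (B * A) * (C * A) := by
      conv_lhs => rw [← hC1]
      simp only [← Matrix.mul_assoc]
    have h6 : (B * A) * (C * A) = C * A := by
      calc (B * A) * (C * A) = (B * A)ᵀ * (C * A)ᵀ := by rw [hB4, hC4]
      _ = ((C * A) * (B * A))ᵀ := (transpose_mul _ _).symm
      _ = (C * A)ᵀ := by
          rw [show (C * A) * (B * A) = C * (A * B * A) by
            simp only [Matrix.mul_assoc], hB1]
      _ = C * A := hC4
    rw [h5, h6]
  calc B = B * A * B := hB2.symm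
  _ = (C * A) * B := by rw [hBA]
  _ = C * (A * B) := by rw [Matrix.mul_assoc]
  _ = C * (A * C) := by rw [hAB]
  _ = C * A * C := by rw [← Matrix.mul_assoc]
  _ = C := hC2

lemma mp_transpose {A B : Matrix m m ℝ} (hA : Aᵀ = A) (hB : IsMoorePenrose A B) :
    IsMoorePenrose A Bᵀ := by
  obtain ⟨h1, h2, h3, h4⟩ := hB
  refine ⟨?_, ?_, ?_, ?_⟩
  · have := congrArg transpose h1
    simp only [transpose_mul, transpose_transpose, hA, Matrix.mul_assoc] at this ⊢
    exact this
  · have := congrArg transpose h2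
    simp only [transpose_mul, transpose_transpose, hA, Matrix.mul_assoc] at this ⊢
    exact this
  · calc (A * Bᵀ)ᵀ = B * Aᵀ := by rw [transpose_mul, transpose_transpose]
    _ = B * A := by rw [hA]
    _ = (B * A)ᵀ := h4.symm
    _ = Aᵀ * Bᵀ := transpose_mul _ _
    _ = A * Bᵀ := by rw [hA]
  · calc (Bᵀ * A)ᵀ = Aᵀ * B := by rw [transpose_mul, transpose_transpose]
    _ = A * B := by rw [hA]
    _ = (A * B)ᵀ := h3.symm
    _ = Bᵀ * Aᵀ := transpose_mul _ _
    _ = Bᵀ * A := by rw [hA]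

lemma mp_symm {A B : Matrix m m ℝ} (hA : Aᵀ = A) (hB : IsMoorePenrose A B) :
    Bᵀ = B :=
  mp_unique (mp_transpose hA hB) hB


lemma dot_tmul (A : Matrix m k ℝ) (z : m → ℝ) (v : k → ℝ) :
    (Aᵀ *ᵥ z) ⬝ᵥ v = z ⬝ᵥ (A *ᵥ v) := by
  rw [mulVec_transpose, ← dotProduct_mulVec]

lemma dot_symm_swap {M : Matrix m m ℝ} (hM : Mᵀ = M) (a z : m → ℝ) :
    (M *ᵥ a) ⬝ᵥ z = a ⬝ᵥ (M *ᵥ z) := by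
  conv_lhs => rw [← hM]
  exact dot_tmul M a z

lemma psd_nonneg' {M : Matrix m m ℝ} (hM : M.PosSemidef) (x : m → ℝ) :
    0 ≤ x ⬝ᵥ M *ᵥ x := by simpa using hM.dotProduct_mulVec_nonneg x

lemma psd_transpose_eq {M : Matrix m m ℝ} (hM : M.PosSemidef) : Mᵀ = M := by
  have := hM.1
  rwa [IsHermitian, conjTranspose_eq_transpose_of_trivial] at this

lemma psd_sandwichXDX {D : Matrix k k ℝ} (hD : D.PosSemidef)
    (X : Matrix m k ℝ) : (X * D * Xᵀ).PosSemidef := by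
  have := hD.mul_mul_conjTranspose_same X
  rwa [conjTranspose_eq_transpose_of_trivial] at this

lemma mat_eq_zero_of_mulVec {M : Matrix m k ℝ} (h : ∀ x, M *ᵥ x = 0) :
    M = 0 := by
  ext i j
  have := congrFun (h (Pi.single j 1)) i
  simpa [mulVec_single] using this

lemma left_mul_eq_zero_of_transpose {A K : Matrix m m ℝ} (hA : A.PosSemidef)
    (h : ∀ x : m → ℝ, A *ᵥ (Kᵀ *ᵥ x) = 0) : K * A = 0 := by
  have h3 : A * Kᵀ = 0 := by
    apply mat_eq_zero_of_mulVec
    intro x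
    rw [← mulVec_mulVec]
    exact h x
  have := congrArg transpose h3
  rwa [transpose_mul, transpose_transpose, psd_transpose_eq hA, transpose_zero]
    at this

/-- If `C * D * Cᵀ = 0` with `D` PSD then `C * D = 0`. -/
lemma sandwich_zero {D : Matrix k k ℝ} (hD : D.PosSemidef) {C : Matrix m k ℝ}
    (h : C * D * Cᵀ = 0) : C * D = 0 := by
  have h2 : ∀ x : m → ℝ, D *ᵥ (Cᵀ *ᵥ x) = 0 := by
    intro x
    have hz : (Cᵀ *ᵥ x) ⬝ᵥ D *ᵥ (Cᵀ *ᵥ x) = 0 := by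
      rw [dot_tmul C x (D *ᵥ (Cᵀ *ᵥ x)), mulVec_mulVec, mulVec_mulVec, h]
      simp
    exact (hD.dotProduct_mulVec_zero_iff (Cᵀ *ᵥ x)).mp (by simpa using hz)
  have h3 : D * Cᵀ = 0 := by
    apply mat_eq_zero_of_mulVec
    intro x
    rw [← mulVec_mulVec]
    exact h2 x
  have := congrArg transpose h3
  rwa [transpose_mul, transpose_transpose, psd_transpose_eq hD, transpose_zero]
    at this

/-- If `K * (A + B) = 0` with `A`, `B` PSD, then `K * A = 0`. -/
lemma kill_left {A B K : Matrix m m ℝ} (hA : A.PosSemidef) (hB : B.PosSemidef)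
    (h : K * (A + B) = 0) : K * A = 0 := by
  have e1 : ∀ M : Matrix m m ℝ, ∀ x : m → ℝ,
      (Kᵀ *ᵥ x) ⬝ᵥ M *ᵥ (Kᵀ *ᵥ x) = x ⬝ᵥ (K * M * Kᵀ) *ᵥ x := by
    intro M x
    rw [dot_tmul K x (M *ᵥ (Kᵀ *ᵥ x)), mulVec_mulVec, mulVec_mulVec]
  have hs : K * A * Kᵀ + K * B * Kᵀ = 0 := by
    have : K * (A + B) * Kᵀ = 0 := by rw [h, Matrix.zero_mul]
    rw [Matrix.mul_add, Matrix.add_mul] at this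
    exact this
  apply left_mul_eq_zero_of_transpose hA
  intro x
  have e2 := congrArg (fun M => x ⬝ᵥ M *ᵥ x) hs
  simp only [Matrix.add_mulVec, dotProduct_add, zero_mulVec, dotProduct_zero]
    at e2
  have n1 := psd_nonneg' hA (Kᵀ *ᵥ x)
  have n2 := psd_nonneg' hB (Kᵀ *ᵥ x)
  rw [e1 A] at n1
  rw [e1 B] at n2
  have hz : (Kᵀ *ᵥ x) ⬝ᵥ A *ᵥ (Kᵀ *ᵥ x) = 0 := by rw [e1 A]; linarith
  exact (hA.dotProduct_mulVec_zero_iff (Kᵀ *ᵥ x)).mp (by simpa using hz)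

lemma trace_vecMulVec_mul (a b : m → ℝ) (M : Matrix m m ℝ) :
    (vecMulVec a b * M).trace = b ⬝ᵥ M *ᵥ a := by
  simp only [Matrix.trace, Matrix.diag, Matrix.mul_apply, vecMulVec_apply,
    dotProduct, mulVec, Finset.mul_sum, Finset.sum_mul]
  rw [Finset.sum_comm]
  congr 1; ext j; congr 1; ext i; ring

lemma vecMulVec_transpose_self (a : m → ℝ) :
    (vecMulVec a a)ᵀ = vecMulVec a a := by
  ext i j; simp [vecMulVec_apply, mul_comm]

lemma vecMulVec_mulVec' (a b x : m → ℝ) :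
    vecMulVec a b *ᵥ x = (b ⬝ᵥ x) • a := by
  ext i
  simp only [mulVec, vecMulVec_apply, dotProduct, Pi.smul_apply, smul_eq_mul,
    Finset.sum_mul]
  congr 1; ext j; ring

end Aux

section Core
variable {n d : ℕ} (y : Fin n → ℝ) (X : Matrix (Fin n) (Fin d) ℝ)
  (D D' : Matrix (Fin d) (Fin d) ℝ) (V V' N' : Matrix (Fin n) (Fin n) ℝ)

lemma nmat_psd (hD : D.PosSemidef) (hV : V.PosSemidef) :
    (X * D * Xᵀ + V).PosSemidef :=
  (psd_sandwichXDX hD X).add hV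

/-- Lower bound: for `β = D w`, `y - Xβ = V u`,
`y ⬝ N' y ≤ (Vu) ⬝ V' (Vu) + β ⬝ D' β`. -/
lemma quad_core (hDpsd : D.PosSemidef) (hVpsd : V.PosSemidef)
    (hD' : IsMoorePenrose D D') (hV' : IsMoorePenrose V V')
    (hN' : IsMoorePenrose (X * D * Xᵀ + V) N')
    (w : Fin d → ℝ) (u : Fin n → ℝ)
    (he : y = X *ᵥ (D *ᵥ w) + V *ᵥ u) :
    y ⬝ᵥ N' *ᵥ y ≤
      (V *ᵥ u) ⬝ᵥ V' *ᵥ (V *ᵥ u) + (D *ᵥ w) ⬝ᵥ D' *ᵥ (D *ᵥ w) := by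
  have hDsym := psd_transpose_eq hDpsd
  have hVsym := psd_transpose_eq hVpsd
  have hNsym := psd_transpose_eq (nmat_psd X D V hDpsd hVpsd)
  have hN'sym : N'ᵀ = N' := mp_symm hNsym hN'
  set z := N' *ᵥ y with hz
  have q1 : (V *ᵥ u) ⬝ᵥ V' *ᵥ (V *ᵥ u) = u ⬝ᵥ V *ᵥ u := by
    rw [dot_symm_swap hVsym, mulVec_mulVec, mulVec_mulVec, hV'.1]
  have q2 : (D *ᵥ w) ⬝ᵥ D' *ᵥ (D *ᵥ w) = w ⬝ᵥ D *ᵥ w := by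
    rw [dot_symm_swap hDsym, mulVec_mulVec, mulVec_mulVec, hD'.1]
  have hzNz : z ⬝ᵥ (X * D * Xᵀ + V) *ᵥ z = y ⬝ᵥ N' *ᵥ y := by
    rw [hz, dot_symm_swap hN'sym, mulVec_mulVec, mulVec_mulVec, hN'.2.1]
  have hsplit : z ⬝ᵥ (X * D * Xᵀ) *ᵥ z + z ⬝ᵥ V *ᵥ z = y ⬝ᵥ N' *ᵥ y := by
    rw [← hzNz, add_mulVec, dotProduct_add]
  have hcross : z ⬝ᵥ (X * D) *ᵥ w + z ⬝ᵥ (V *ᵥ u) = y ⬝ᵥ N' *ᵥ y := by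
    rw [← dotProduct_add]
    have h6 : (X * D) *ᵥ w + V *ᵥ u = y := by rw [← mulVec_mulVec]; exact he.symm
    rw [h6, hz, dotProduct_comm]
  have c1 : (Xᵀ *ᵥ z) ⬝ᵥ D *ᵥ w = z ⬝ᵥ (X * D) *ᵥ w := by
    rw [dot_tmul, mulVec_mulVec]
  have c2 : w ⬝ᵥ D *ᵥ (Xᵀ *ᵥ z) = z ⬝ᵥ (X * D) *ᵥ w := by
    rw [← dot_symm_swap hDsym w (Xᵀ *ᵥ z), dotProduct_comm, dot_tmul,
      mulVec_mulVec]
  have c3 : (Xᵀ *ᵥ z) ⬝ᵥ D *ᵥ (Xᵀ *ᵥ z) = z ⬝ᵥ (X * D * Xᵀ) *ᵥ z := by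
    rw [dot_tmul, mulVec_mulVec, mulVec_mulVec]
  have c4 : u ⬝ᵥ V *ᵥ z = z ⬝ᵥ (V *ᵥ u) := by
    rw [← dot_symm_swap hVsym u z, dotProduct_comm]
  have c5 : z ⬝ᵥ V *ᵥ u = z ⬝ᵥ (V *ᵥ u) := rfl
  have ha : (w - Xᵀ *ᵥ z) ⬝ᵥ D *ᵥ (w - Xᵀ *ᵥ z)
      = w ⬝ᵥ D *ᵥ w - 2 * (z ⬝ᵥ (X * D) *ᵥ w) + z ⬝ᵥ (X * D * Xᵀ) *ᵥ z := by
    simp only [mulVec_sub, sub_dotProduct, dotProduct_sub, c1, c2, c3]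
    ring
  have hb : (u - z) ⬝ᵥ V *ᵥ (u - z)
      = u ⬝ᵥ V *ᵥ u - 2 * (z ⬝ᵥ (V *ᵥ u)) + z ⬝ᵥ V *ᵥ z := by
    simp only [mulVec_sub, sub_dotProduct, dotProduct_sub, c4, c5]
    ring
  have n1 := psd_nonneg' hDpsd (w - Xᵀ *ᵥ z)
  have n2 := psd_nonneg' hVpsd (u - z)
  rw [q1, q2]
  linarith [ha, hb, hsplit, hcross, n1, n2]

/-- Properties of `β* = (D Xᵀ N') y` when `(N N') y = y`. -/
lemma bstar_core (hDpsd : D.PosSemidef) (hVpsd : V.PosSemidef)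
    (hD' : IsMoorePenrose D D') (hV' : IsMoorePenrose V V')
    (hN' : IsMoorePenrose (X * D * Xᵀ + V) N')
    (hfeas : ((X * D * Xᵀ + V) * N') *ᵥ y = y) :
    y - X *ᵥ ((D * Xᵀ * N') *ᵥ y) = V *ᵥ (N' *ᵥ y) ∧
    (D * Xᵀ * N') *ᵥ y = D *ᵥ ((Xᵀ * N') *ᵥ y) ∧
    (y - X *ᵥ ((D * Xᵀ * N') *ᵥ y)) ⬝ᵥ V' *ᵥ (y - X *ᵥ ((D * Xᵀ * N') *ᵥ y)) +
      ((D * Xᵀ * N') *ᵥ y) ⬝ᵥ D' *ᵥ ((D * Xᵀ * N') *ᵥ y) = y ⬝ᵥ N' *ᵥ y := by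
  have hDsym := psd_transpose_eq hDpsd
  have hVsym := psd_transpose_eq hVpsd
  have hNsym := psd_transpose_eq (nmat_psd X D V hDpsd hVpsd)
  have hN'sym : N'ᵀ = N' := mp_symm hNsym hN'
  set z := N' *ᵥ y with hz
  clear_value z
  have e1 : X *ᵥ ((D * Xᵀ * N') *ᵥ y) = (X * D * Xᵀ) *ᵥ z := by
    rw [hz]
    simp only [mulVec_mulVec, Matrix.mul_assoc]
  have e2 : (X * D * Xᵀ) *ᵥ z + V *ᵥ z = y := by
    rw [hz, mulVec_mulVec, mulVec_mulVec, ← add_mulVec, ← Matrix.add_mul]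
    exact hfeas
  have part1 : y - X *ᵥ ((D * Xᵀ * N') *ᵥ y) = V *ᵥ z := by
    rw [e1, ← e2]
    abel
  have part2 : (D * Xᵀ * N') *ᵥ y = D *ᵥ ((Xᵀ * N') *ᵥ y) := by
    rw [mulVec_mulVec, Matrix.mul_assoc]
  have part3a : (Xᵀ * N') *ᵥ y = Xᵀ *ᵥ z := by rw [hz, mulVec_mulVec]
  have q1 : (V *ᵥ z) ⬝ᵥ V' *ᵥ (V *ᵥ z) = z ⬝ᵥ V *ᵥ z := by
    rw [dot_symm_swap hVsym, mulVec_mulVec, mulVec_mulVec, hV'.1]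
  have q2 : (D *ᵥ (Xᵀ *ᵥ z)) ⬝ᵥ D' *ᵥ (D *ᵥ (Xᵀ *ᵥ z))
      = (Xᵀ *ᵥ z) ⬝ᵥ D *ᵥ (Xᵀ *ᵥ z) := by
    rw [dot_symm_swap hDsym, mulVec_mulVec, mulVec_mulVec, hD'.1]
  have c3 : (Xᵀ *ᵥ z) ⬝ᵥ D *ᵥ (Xᵀ *ᵥ z) = z ⬝ᵥ (X * D * Xᵀ) *ᵥ z := by
    rw [dot_tmul, mulVec_mulVec, mulVec_mulVec]
  have hzNz : z ⬝ᵥ (X * D * Xᵀ + V) *ᵥ z = y ⬝ᵥ z := by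
    rw [hz, dot_symm_swap hN'sym, mulVec_mulVec, mulVec_mulVec, hN'.2.1]
  refine ⟨part1, part2, ?_⟩
  rw [part1, part2, part3a, q1, q2, c3, ← hzNz, add_mulVec, dotProduct_add]
  ring


lemma feas_core (hDpsd : D.PosSemidef) (hVpsd : V.PosSemidef)
    (hN' : IsMoorePenrose (X * D * Xᵀ + V) N')
    (w : Fin d → ℝ) (u : Fin n → ℝ)
    (he : y = X *ᵥ (D *ᵥ w) + V *ᵥ u) :
    ((X * D * Xᵀ + V) * N') *ᵥ y = y := by
  set K : Matrix (Fin n) (Fin n) ℝ := 1 - (X * D * Xᵀ + V) * N' with hK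
  have hKN : K * (X * D * Xᵀ + V) = 0 := by
    rw [hK, Matrix.sub_mul, Matrix.one_mul, Matrix.mul_assoc, ← Matrix.mul_assoc,
      hN'.1, sub_self]
  have hXD0 : K * (X * D * Xᵀ) = 0 :=
    kill_left (psd_sandwichXDX hDpsd X) hVpsd hKN
  have hV0 : K * V = 0 := by
    refine kill_left hVpsd (psd_sandwichXDX hDpsd X) ?_
    rwa [add_comm] at hKN
  have hKXD : K * X * D = 0 := by
    apply sandwich_zero hDpsd (C := K * X)
    rw [transpose_mul]
    calc K * X * D * (Xᵀ * Kᵀ) = K * (X * D * Xᵀ) * Kᵀ := by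
          simp only [Matrix.mul_assoc]
    _ = 0 := by rw [hXD0, Matrix.zero_mul]
  have hKy : K *ᵥ y = 0 := by
    rw [he, mulVec_add]
    have e1 : K *ᵥ (X *ᵥ (D *ᵥ w)) = (K * X * D) *ᵥ w := by
      simp only [mulVec_mulVec, Matrix.mul_assoc]
    have e2 : K *ᵥ (V *ᵥ u) = (K * V) *ᵥ u := by simp only [mulVec_mulVec]
    rw [e1, e2, hKXD, hV0]
    simp
  have e3 : K *ᵥ y = y - ((X * D * Xᵀ + V) * N') *ᵥ y := by
    rw [hK, sub_mulVec, one_mulVec]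
  rw [e3] at hKy
  exact (sub_eq_zero.mp hKy).symm

lemma w_core (hDpsd : D.PosSemidef) (hVpsd : V.PosSemidef)
    (hN' : IsMoorePenrose (X * D * Xᵀ + V) N')
    (hfeas : ((X * D * Xᵀ + V) * N') *ᵥ y = y) :
    ((vecMulVec y y - (X * D * Xᵀ + V))ᵀ * N' *
        (vecMulVec y y - (X * D * Xᵀ + V))).trace
      = (y ⬝ᵥ y) * (y ⬝ᵥ N' *ᵥ y) - 2 * (y ⬝ᵥ y) + (X * D * Xᵀ + V).trace := by
  have hNsym := psd_transpose_eq (nmat_psd X D V hDpsd hVpsd)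
  have hN'sym : N'ᵀ = N' := mp_symm hNsym hN'
  set M := vecMulVec y y with hM
  set Nm := X * D * Xᵀ + V with hNm
  rw [transpose_sub, hNsym]
  rw [show Mᵀ = M by rw [hM]; exact vecMulVec_transpose_self y]
  have expand : (M - Nm) * N' * (M - Nm)
      = (M * N' * M - Nm * N' * M) - (M * N' * Nm - Nm * N' * Nm) := by
    simp only [Matrix.sub_mul, Matrix.mul_sub]
  rw [expand, trace_sub, trace_sub, trace_sub]
  have t1 : (M * N' * M).trace = (y ⬝ᵥ y) * (y ⬝ᵥ N' *ᵥ y) := by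
    rw [Matrix.mul_assoc, hM, trace_vecMulVec_mul, ← mulVec_mulVec,
      vecMulVec_mulVec', mulVec_smul, dotProduct_smul, smul_eq_mul]
  have t2 : (Nm * N' * M).trace = y ⬝ᵥ y := by
    rw [trace_mul_comm, hM, trace_vecMulVec_mul, hfeas]
  have t3 : (M * N' * Nm).trace = y ⬝ᵥ y := by
    rw [Matrix.mul_assoc, hM, trace_vecMulVec_mul]
    have e : N' * Nm = (Nm * N')ᵀ := by rw [transpose_mul, hNsym, hN'sym]
    rw [e, dotProduct_comm, dot_tmul, hfeas]
  have t4 : (Nm * N' * Nm).trace = Nm.trace := by rw [hN'.1]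
  rw [t1, t2, t3, t4]
  ring

end Core


/-- `N(D,V) = X D Xᵀ + V`. -/
def Nmat {n d : ℕ} (X : Matrix (Fin n) (Fin d) ℝ)
    (p : Matrix (Fin d) (Fin d) ℝ × Matrix (Fin n) (Fin n) ℝ) :
    Matrix (Fin n) (Fin n) ℝ :=
  X * p.1 * Xᵀ + p.2

/-- `Θ(D,V) = {β : y − Xβ ∈ range(V), β ∈ range(D)}`. -/
def Theta {n d : ℕ} (y : Fin n → ℝ) (X : Matrix (Fin n) (Fin d) ℝ)
    (p : Matrix (Fin d) (Fin d) ℝ × Matrix (Fin n) (Fin n) ℝ) :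
    Set (Fin d → ℝ) :=
  {β | y - X.mulVec β ∈ Set.range p.2.mulVec ∧ β ∈ Set.range p.1.mulVec}

/-- `J(β; D, V) = (y − Xβ)ᵀ V† (y − Xβ) + βᵀ D† β + tr(N(D,V))/‖y‖₂²`. -/
noncomputable def Jcost {n d : ℕ} (y : Fin n → ℝ) (X : Matrix (Fin n) (Fin d) ℝ)
    (pinvd : Matrix (Fin d) (Fin d) ℝ → Matrix (Fin d) (Fin d) ℝ)
    (pinvn : Matrix (Fin n) (Fin n) ℝ → Matrix (Fin n) (Fin n) ℝ)
    (p : Matrix (Fin d) (Fin d) ℝ × Matrix (Fin n) (Fin n) ℝ)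
    (β : Fin d → ℝ) : ℝ :=
  (y - X.mulVec β) ⬝ᵥ (pinvn p.2).mulVec (y - X.mulVec β) +
    β ⬝ᵥ (pinvd p.1).mulVec β + (Nmat X p).trace / (y ⬝ᵥ y)

/-- The SPICE covariance-fitting criterion `W(D,V) = ‖y yᵀ − N‖²_{N†}`. -/
noncomputable def Wcrit {n d : ℕ} (y : Fin n → ℝ) (X : Matrix (Fin n) (Fin d) ℝ)
    (pinvn : Matrix (Fin n) (Fin n) ℝ → Matrix (Fin n) (Fin n) ℝ)
    (p : Matrix (Fin d) (Fin d) ℝ × Matrix (Fin n) (Fin n) ℝ) : ℝ :=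
  ((vecMulVec y y - Nmat X p)ᵀ * pinvn (Nmat X p) *
      (vecMulVec y y - Nmat X p)).trace

/-- `G(β) = inf { J(β; D, V) : (D,V) ∈ 𝒮, β ∈ Θ(D,V) }` (extended-real infimum). -/
noncomputable def Gfun {n d : ℕ} (y : Fin n → ℝ) (X : Matrix (Fin n) (Fin d) ℝ)
    (pinvd : Matrix (Fin d) (Fin d) ℝ → Matrix (Fin d) (Fin d) ℝ)
    (pinvn : Matrix (Fin n) (Fin n) ℝ → Matrix (Fin n) (Fin n) ℝ)
    (S : Set (Matrix (Fin d) (Fin d) ℝ × Matrix (Fin n) (Fin n) ℝ))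
    (β : Fin d → ℝ) : EReal :=
  sInf {r : EReal | ∃ p ∈ S, β ∈ Theta y X p ∧
    r = (Jcost y X pinvd pinvn p β : ℝ)}

/-- If `(D*, V*) ∈ 𝒮` is feasible and minimizes the SPICE criterion `W` among the
feasible pairs, then `β* = D* Xᵀ N(D*,V*)† y` minimizes `G`. -/
theorem stmt10 {n d : ℕ} (y : Fin n → ℝ) (hy0 : y ≠ 0)
    (X : Matrix (Fin n) (Fin d) ℝ)
    (S : Set (Matrix (Fin d) (Fin d) ℝ × Matrix (Fin n) (Fin n) ℝ))
    (hS : ∀ p ∈ S, p.1.PosSemidef ∧ p.2.PosSemidef)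
    (pinvd : Matrix (Fin d) (Fin d) ℝ → Matrix (Fin d) (Fin d) ℝ)
    (pinvn : Matrix (Fin n) (Fin n) ℝ → Matrix (Fin n) (Fin n) ℝ)
    (hpinvd : ∀ A : Matrix (Fin d) (Fin d) ℝ, A.PosSemidef →
      IsMoorePenrose A (pinvd A))
    (hpinvn : ∀ A : Matrix (Fin n) (Fin n) ℝ, A.PosSemidef →
      IsMoorePenrose A (pinvn A))
    (Ds : Matrix (Fin d) (Fin d) ℝ) (Vs : Matrix (Fin n) (Fin n) ℝ)
    (hmem : (Ds, Vs) ∈ S)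
    (hfeas : y ∈ Set.range (Nmat X (Ds, Vs)).mulVec)
    (hmin : ∀ p ∈ S, y ∈ Set.range (Nmat X p).mulVec →
      Wcrit y X pinvn (Ds, Vs) ≤ Wcrit y X pinvn p) :
    ∀ β : Fin d → ℝ,
      Gfun y X pinvd pinvn S ((Ds * Xᵀ * pinvn (Nmat X (Ds, Vs))).mulVec y) ≤
        Gfun y X pinvd pinvn S β := by
  intro β
  have hc : 0 < y ⬝ᵥ y := by
    have h0 : (0:ℝ) ≤ y ⬝ᵥ y := by
      rw [dotProduct]
      exact Finset.sum_nonneg fun i _ => mul_self_nonneg (y i)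
    exact h0.lt_of_ne' fun h => hy0 (dotProduct_self_eq_zero.mp h)
  obtain ⟨hD0, hV0⟩ := hS (Ds, Vs) hmem
  have hN0psd : (Nmat X (Ds, Vs)).PosSemidef := nmat_psd X Ds Vs hD0 hV0
  have hPen0 : IsMoorePenrose (X * Ds * Xᵀ + Vs) (pinvn (Nmat X (Ds, Vs))) :=
    hpinvn _ hN0psd
  have hfeas0 : ((X * Ds * Xᵀ + Vs) * pinvn (Nmat X (Ds, Vs))) *ᵥ y = y := by
    obtain ⟨v, hv⟩ := hfeas
    have hv' : (X * Ds * Xᵀ + Vs) *ᵥ v = y := hv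
    rw [← hv', mulVec_mulVec, hPen0.1]
  obtain ⟨hb1, hb2, hb3⟩ :=
    bstar_core y X Ds (pinvd Ds) Vs (pinvn Vs) (pinvn (Nmat X (Ds, Vs)))
      hD0 hV0 (hpinvd Ds hD0) (hpinvn Vs hV0) hPen0 hfeas0
  have hbsTheta : (Ds * Xᵀ * pinvn (Nmat X (Ds, Vs))).mulVec y
      ∈ Theta y X (Ds, Vs) :=
    ⟨⟨pinvn (Nmat X (Ds, Vs)) *ᵥ y, hb1.symm⟩, ⟨(Xᵀ * pinvn (Nmat X (Ds, Vs))) *ᵥ y, hb2.symm⟩⟩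
  have hJ0 : Jcost y X pinvd pinvn (Ds, Vs)
        ((Ds * Xᵀ * pinvn (Nmat X (Ds, Vs))).mulVec y)
      = y ⬝ᵥ pinvn (Nmat X (Ds, Vs)) *ᵥ y
        + (Nmat X (Ds, Vs)).trace / (y ⬝ᵥ y) := by
    simp only [Jcost]
    rw [hb3]
  have hW0 : Wcrit y X pinvn (Ds, Vs)
      = (y ⬝ᵥ y) * (y ⬝ᵥ pinvn (Nmat X (Ds, Vs)) *ᵥ y) - 2 * (y ⬝ᵥ y)
        + (Nmat X (Ds, Vs)).trace :=
    w_core y X Ds Vs (pinvn (Nmat X (Ds, Vs))) hD0 hV0 hPen0 hfeas0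
  refine le_sInf ?_
  rintro r ⟨p, hpS, hβΘ, rfl⟩
  obtain ⟨hDp, hVp⟩ := hS p hpS
  simp only [Theta, Set.mem_setOf_eq] at hβΘ
  obtain ⟨⟨u, hu⟩, ⟨w, hw⟩⟩ := hβΘ
  have hNp : (Nmat X p).PosSemidef := nmat_psd X p.1 p.2 hDp hVp
  have hPenp : IsMoorePenrose (X * p.1 * Xᵀ + p.2) (pinvn (Nmat X p)) :=
    hpinvn _ hNp
  have he : y = X *ᵥ (p.1 *ᵥ w) + p.2 *ᵥ u := by
    rw [hw, hu]
    abel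
  have hfeasp : ((X * p.1 * Xᵀ + p.2) * pinvn (Nmat X p)) *ᵥ y = y :=
    feas_core y X p.1 p.2 (pinvn (Nmat X p)) hDp hVp hPenp w u he
  have hWp : Wcrit y X pinvn p
      = (y ⬝ᵥ y) * (y ⬝ᵥ pinvn (Nmat X p) *ᵥ y) - 2 * (y ⬝ᵥ y)
        + (Nmat X p).trace :=
    w_core y X p.1 p.2 (pinvn (Nmat X p)) hDp hVp hPenp hfeasp
  have hlow : y ⬝ᵥ pinvn (Nmat X p) *ᵥ y + (Nmat X p).trace / (y ⬝ᵥ y)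
      ≤ Jcost y X pinvd pinvn p β := by
    have hq := quad_core y X p.1 (pinvd p.1) p.2 (pinvn p.2) (pinvn (Nmat X p))
      hDp hVp (hpinvd _ hDp) (hpinvn _ hVp) hPenp w u he
    rw [hu, hw] at hq
    simp only [Jcost]
    linarith [hq]
  have hMin := hmin p hpS ⟨pinvn (Nmat X p) *ᵥ y, by
    show (X * p.1 * Xᵀ + p.2) *ᵥ (pinvn (Nmat X p) *ᵥ y) = y
    rw [mulVec_mulVec]
    exact hfeasp⟩
  have key : y ⬝ᵥ pinvn (Nmat X (Ds, Vs)) *ᵥ y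
        + (Nmat X (Ds, Vs)).trace / (y ⬝ᵥ y)
      ≤ y ⬝ᵥ pinvn (Nmat X p) *ᵥ y + (Nmat X p).trace / (y ⬝ᵥ y) := by
    rw [hW0, hWp] at hMin
    rw [← mul_le_mul_iff_of_pos_right hc]
    have e1 : ∀ (aa t : ℝ), (aa + t / (y ⬝ᵥ y)) * (y ⬝ᵥ y)
        = (y ⬝ᵥ y) * aa + t := by
      intro aa t
      field_simp
    rw [e1, e1]
    linarith [hMin]
  calc Gfun y X pinvd pinvn S ((Ds * Xᵀ * pinvn (Nmat X (Ds, Vs))).mulVec y)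
      ≤ ((Jcost y X pinvd pinvn (Ds, Vs)
          ((Ds * Xᵀ * pinvn (Nmat X (Ds, Vs))).mulVec y) : ℝ) : EReal) :=
      sInf_le ⟨(Ds, Vs), hmem, hbsTheta, rfl⟩
  _ ≤ ((Jcost y X pinvd pinvn p β : ℝ) : EReal) := by
      apply EReal.coe_le_coe_iff.mpr
      rw [hJ0]
      linarith [key, hlow]
end

section
/- Let y ∈ ℝⁿ with y ≠ 0, X an n×d real matrix, and let 𝒮 be a set of pairs (D, V) of positive semidefinite matrices of sizes d×d and n×n. With N(D,V) = X D Xᵀ + V, J(β; D, V) = (y − Xβ)ᵀ V† (y − Xβ) + βᵀ D† β + tr(N(D,V))/‖y‖₂², Θ(D,V) = {β : y − Xβ ∈ range(V), β ∈ range(D)}, W(D,V) = tr((y yᵀ − N(D,V))ᵀ N(D,V)† (y yᵀ − N(D,V))), and G(β) = inf{ J(β; D, V) : (D,V) ∈ 𝒮, β ∈ Θ(D,V) }, assume: (i) there exists (D*, V*) ∈ 𝒮 with y ∈ range(N(D*,V*)) minimizing W over the feasible pairs in 𝒮; (ii) β_G ∈ ℝᵈ satisfies G(β_G) ≤ G(β)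 for all β; and (iii) the infimum defining G(β_G) is attained, i.e., there is (D_G, V_G) ∈ 𝒮 with β_G ∈ Θ(D_G, V_G) and J(β_G; D_G, V_G) = G(β_G). Then (D_G, V_G) minimizes W over the feasible pairs in 𝒮, and β_G = D_G Xᵀ N(D_G,V_G)† y. -/
open Matrix

namespace SpiceAux

variable {m k : Type*} [Fintype m] [Fintype k]

lemma mulVec_dot (M : Matrix m k ℝ) (x : k → ℝ) (z : m → ℝ) :
    (M *ᵥ x) ⬝ᵥ z = x ⬝ᵥ (Mᵀ *ᵥ z) := by
  rw [dotProduct_mulVec, vecMul_transpose]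

lemma mp_unique {A B C : Matrix m m ℝ} (hB : IsMoorePenrose A B)
    (hC : IsMoorePenrose A C) : B = C := by
  obtain ⟨hB1, hB2, hB3, hB4⟩ := hB
  obtain ⟨hC1, hC2, hC3, hC4⟩ := hC
  have h1 : A * B = A * C := by
    calc A * B = (A * C * A) * B := by rw [hC1]
      _ = (A * C) * (A * B) := by rw [Matrix.mul_assoc]
      _ = (A * C)ᵀ * (A * B)ᵀ := by rw [hC3, hB3]
      _ = Cᵀ * ((A * B * A)ᵀ) := by
          simp [transpose_mul, Matrix.mul_assoc]
      _ = Cᵀ * Aᵀ := by rw [hB1]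
      _ = A * C := by rw [← transpose_mul, hC3]
  have h2 : B * A = C * A := by
    calc B * A = B * (A * C * A) := by rw [hC1]
      _ = (B * A) * (C * A) := by simp [Matrix.mul_assoc]
      _ = (B * A)ᵀ * (C * A)ᵀ := by rw [hB4, hC4]
      _ = ((A * (B * A))ᵀ) * Cᵀ := by
          simp [transpose_mul, Matrix.mul_assoc]
      _ = Aᵀ * Cᵀ := by rw [← Matrix.mul_assoc, hB1]
      _ = C * A := by rw [← transpose_mul, hC4]
  calc B = B * A * B := hB2.symm
    _ = B * (A * C) := by rw [Matrix.mul_assoc, h1]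
    _ = (C * A) * C := by rw [← Matrix.mul_assoc, h2]
    _ = C := hC2

lemma mp_transpose {A B : Matrix m m ℝ} (h : IsMoorePenrose A B) :
    IsMoorePenrose Aᵀ Bᵀ := by
  obtain ⟨h1, h2, h3, h4⟩ := h
  refine ⟨?_, ?_, ?_, ?_⟩
  · rw [← transpose_mul, ← transpose_mul, ← Matrix.mul_assoc, h1]
  · rw [← transpose_mul, ← transpose_mul, ← Matrix.mul_assoc, h2]
  · rw [← transpose_mul, transpose_transpose, h4]
  · rw [← transpose_mul, transpose_transpose, h3]

lemma pinv_symm {A B : Matrix m m ℝ} (hA : Aᵀ = A) (h : IsMoorePenrose A B) :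
    Bᵀ = B := by
  have h' := mp_transpose h
  rw [hA] at h'
  exact mp_unique h' h

lemma qf_nonneg {A : Matrix m m ℝ} (hA : A.PosSemidef) (x : m → ℝ) :
    0 ≤ x ⬝ᵥ A *ᵥ x := by
  simpa using hA.dotProduct_mulVec_nonneg x

lemma qf_zero {A : Matrix m m ℝ} (hA : A.PosSemidef) {x : m → ℝ}
    (h : x ⬝ᵥ A *ᵥ x = 0) : A *ᵥ x = 0 := by
  exact (hA.dotProduct_mulVec_zero_iff x).mp (by simpa using h)

lemma psd_symm {A : Matrix m m ℝ} (hA : A.PosSemidef) : Aᵀ = A := by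
  have := hA.isHermitian
  rwa [Matrix.IsHermitian, conjTranspose_eq_transpose_of_trivial] at this

lemma pinv_psd {A B : Matrix m m ℝ} (hA : A.PosSemidef)
    (h : IsMoorePenrose A B) : B.PosSemidef := by
  have hBs : Bᵀ = B := pinv_symm (psd_symm hA) h
  have h2 := hA.conjTranspose_mul_mul_same B
  rwa [conjTranspose_eq_transpose_of_trivial, hBs, h.2.1] at h2

lemma psd_mul_mul {X : Matrix m k ℝ} {D : Matrix k k ℝ} (hD : D.PosSemidef) :
    (X * D * Xᵀ).PosSemidef := by
  have := hD.mul_mul_conjTranspose_same X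
  rwa [conjTranspose_eq_transpose_of_trivial] at this

end SpiceAux

namespace SpiceAux

variable {m k : Type*} [Fintype m] [Fintype k]

lemma proj_fixes {X : Matrix m k ℝ} {D : Matrix k k ℝ} {V B : Matrix m m ℝ}
    (hD : D.PosSemidef) (hV : V.PosSemidef)
    (hB : IsMoorePenrose (X * D * Xᵀ + V) B) {v : m → ℝ}
    (hv : (∃ u, V *ᵥ u = v) ∨ (∃ u, X *ᵥ (D *ᵥ u) = v)) :
    (X * D * Xᵀ + V) *ᵥ (B *ᵥ v) = v := by
  set N := X * D * Xᵀ + V with hNdef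
  have hNpsd : N.PosSemidef := (psd_mul_mul hD).add hV
  have hNs : Nᵀ = N := psd_symm hNpsd
  have hVs : Vᵀ = V := psd_symm hV
  have hDs : Dᵀ = D := psd_symm hD
  have hP : (N * B)ᵀ = N * B := hB.2.2.1
  have hNNB : N * (N * B) = N := by
    have h := congrArg transpose hB.1
    rwa [transpose_mul, hP, hNs] at h
  set w := v - N *ᵥ (B *ᵥ v) with hw
  have hNw : N *ᵥ w = 0 := by
    rw [hw]
    simp only [mulVec_sub, mulVec_mulVec, hNNB, sub_self]
  have hsplit : w ⬝ᵥ ((X * D * Xᵀ) *ᵥ w) + w ⬝ᵥ (V *ᵥ w) = 0 := by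
    have h0 : w ⬝ᵥ (N *ᵥ w) = 0 := by rw [hNw, dotProduct_zero]
    rw [hNdef, add_mulVec, dotProduct_add] at h0
    exact h0
  have h1 : 0 ≤ w ⬝ᵥ (X * D * Xᵀ) *ᵥ w := qf_nonneg (psd_mul_mul hD) w
  have h2 : 0 ≤ w ⬝ᵥ V *ᵥ w := qf_nonneg hV w
  have hVw : V *ᵥ w = 0 := qf_zero hV (by linarith)
  have hDXw : D *ᵥ (Xᵀ *ᵥ w) = 0 := by
    apply qf_zero hD
    have e : w ⬝ᵥ (X * D * Xᵀ) *ᵥ w = (Xᵀ *ᵥ w) ⬝ᵥ D *ᵥ (Xᵀ *ᵥ w) := by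
      rw [show (X * D * Xᵀ) *ᵥ w = X *ᵥ (D *ᵥ (Xᵀ *ᵥ w)) by
            rw [mulVec_mulVec, mulVec_mulVec],
          dotProduct_comm, mulVec_dot, dotProduct_comm]
    linarith [hsplit, h2, e ▸ h1]
  have hwv : w ⬝ᵥ v = 0 := by
    rcases hv with ⟨u, rfl⟩ | ⟨u, rfl⟩
    · rw [dotProduct_comm, mulVec_dot, hVs, hVw, dotProduct_zero]
    · rw [dotProduct_comm, mulVec_dot, mulVec_dot, hDs, hDXw, dotProduct_zero]
  have hPP : (N * B) * (N * B) = N * B := by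
    calc (N * B) * (N * B) = (N * B * N) * B := by
          rw [Matrix.mul_assoc (N * B) N B]
      _ = N * B := by rw [hB.1]
  have hPw : (N * B) *ᵥ w = 0 := by
    rw [hw]
    simp only [mulVec_sub, mulVec_mulVec, ← Matrix.mul_assoc]
    rw [show N * B * N * B = N * B by rw [Matrix.mul_assoc]; exact hPP, sub_self]
  have hww : w ⬝ᵥ w = 0 := by
    have e1 : w ⬝ᵥ ((N *ᵥ (B *ᵥ v))) = 0 := by
      rw [mulVec_mulVec, dotProduct_comm, mulVec_dot, hP, hPw, dotProduct_zero]
    calc w ⬝ᵥ w = w ⬝ᵥ v - w ⬝ᵥ (N *ᵥ (B *ᵥ v)) := by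
          rw [hw, dotProduct_sub]
      _ = 0 := by rw [hwv, e1, sub_zero]
  have hw0 : w = 0 := dotProduct_self_eq_zero.mp hww
  rw [hw] at hw0
  exact (sub_eq_zero.mp hw0).symm

end SpiceAux

namespace SpiceAux

variable {m k : Type*} [Fintype m] [Fintype k]

lemma sandwich {A Ap : Matrix k k ℝ} (hAs : Aᵀ = A) (hAp : IsMoorePenrose A Ap)
    (x z : k → ℝ) : (A *ᵥ x) ⬝ᵥ Ap *ᵥ (A *ᵥ z) = x ⬝ᵥ A *ᵥ z := by
  rw [mulVec_dot, hAs, mulVec_mulVec, mulVec_mulVec, hAp.1]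

lemma dot_symm {A : Matrix k k ℝ} (hAs : Aᵀ = A) (x z : k → ℝ) :
    x ⬝ᵥ A *ᵥ z = z ⬝ᵥ A *ᵥ x := by
  rw [dotProduct_mulVec, ← mulVec_transpose, hAs, dotProduct_comm]

/-- The central quadratic identity:
`f(β) = yᵀ B y + (Xδ)ᵀ Vp (Xδ) + δᵀ Dp δ` with `δ = β - D Xᵀ B y`. -/
lemma quad_identity {X : Matrix m k ℝ} {y : m → ℝ}
    {D Dp : Matrix k k ℝ} {V Vp B : Matrix m m ℝ}
    (hD : D.PosSemidef) (hV : V.PosSemidef)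
    (hDp : IsMoorePenrose D Dp) (hVp : IsMoorePenrose V Vp)
    (hyr : (X * D * Xᵀ + V) *ᵥ (B *ᵥ y) = y)
    {β : k → ℝ} {u : m → ℝ} {w : k → ℝ}
    (hu : V *ᵥ u = y - X *ᵥ β) (hwβ : D *ᵥ w = β) :
    (y - X *ᵥ β) ⬝ᵥ Vp *ᵥ (y - X *ᵥ β) + β ⬝ᵥ Dp *ᵥ β
      = y ⬝ᵥ B *ᵥ y
        + (X *ᵥ (β - D *ᵥ (Xᵀ *ᵥ (B *ᵥ y)))) ⬝ᵥ
            Vp *ᵥ (X *ᵥ (β - D *ᵥ (Xᵀ *ᵥ (B *ᵥ y))))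
        + (β - D *ᵥ (Xᵀ *ᵥ (B *ᵥ y))) ⬝ᵥ Dp *ᵥ (β - D *ᵥ (Xᵀ *ᵥ (B *ᵥ y))) := by
  subst hwβ
  have hVs : Vᵀ = V := psd_symm hV
  have hDs : Dᵀ = D := psd_symm hD
  have h5 : X *ᵥ (D *ᵥ (Xᵀ *ᵥ (B *ᵥ y))) = y - V *ᵥ (B *ᵥ y) := by
    have h := hyr
    rw [add_mulVec] at h
    rw [mulVec_mulVec, mulVec_mulVec, eq_sub_iff_add_eq]
    exact h
  have hXDw : X *ᵥ (D *ᵥ w) = y - V *ᵥ u := by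
    rw [hu]; abel
  have hXδ : X *ᵥ (D *ᵥ w - D *ᵥ (Xᵀ *ᵥ (B *ᵥ y)))
      = V *ᵥ (B *ᵥ y) - V *ᵥ u := by
    rw [mulVec_sub, hXDw, h5]; abel
  rw [← hu, hXδ]
  -- scalar facts
  have f1 := sandwich hVs hVp (B *ᵥ y) (B *ᵥ y)
  have f2 := sandwich hVs hVp u (B *ᵥ y)
  have f3 := sandwich hVs hVp (B *ᵥ y) u
  have g2 := sandwich hDs hDp w (Xᵀ *ᵥ (B *ᵥ y))
  have g3 := sandwich hDs hDp (Xᵀ *ᵥ (B *ᵥ y)) w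
  have g4 := sandwich hDs hDp (Xᵀ *ᵥ (B *ᵥ y)) (Xᵀ *ᵥ (B *ᵥ y))
  have h1 : u ⬝ᵥ V *ᵥ (B *ᵥ y) = (B *ᵥ y) ⬝ᵥ V *ᵥ u := dot_symm hVs u (B *ᵥ y)
  have h2 : w ⬝ᵥ D *ᵥ (Xᵀ *ᵥ (B *ᵥ y)) = (Xᵀ *ᵥ (B *ᵥ y)) ⬝ᵥ D *ᵥ w :=
    dot_symm hDs w (Xᵀ *ᵥ (B *ᵥ y))
  have h3 : (Xᵀ *ᵥ (B *ᵥ y)) ⬝ᵥ D *ᵥ w = (B *ᵥ y) ⬝ᵥ (X *ᵥ (D *ᵥ w)) := by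
    rw [mulVec_dot, transpose_transpose]
  have h4 : (Xᵀ *ᵥ (B *ᵥ y)) ⬝ᵥ D *ᵥ (Xᵀ *ᵥ (B *ᵥ y))
      = (B *ᵥ y) ⬝ᵥ (X *ᵥ (D *ᵥ (Xᵀ *ᵥ (B *ᵥ y)))) := by
    rw [mulVec_dot, transpose_transpose]
  have h5s : (B *ᵥ y) ⬝ᵥ (X *ᵥ (D *ᵥ (Xᵀ *ᵥ (B *ᵥ y))))
      = (B *ᵥ y) ⬝ᵥ y - (B *ᵥ y) ⬝ᵥ (V *ᵥ (B *ᵥ y)) := by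
    rw [h5, dotProduct_sub]
  have h7s : (B *ᵥ y) ⬝ᵥ (X *ᵥ (D *ᵥ w))
      = (B *ᵥ y) ⬝ᵥ y - (B *ᵥ y) ⬝ᵥ (V *ᵥ u) := by
    rw [hXDw, dotProduct_sub]
  have h6 : y ⬝ᵥ B *ᵥ y = (B *ᵥ y) ⬝ᵥ y := dotProduct_comm _ _
  simp only [mulVec_sub, dotProduct_sub, sub_dotProduct]
  linarith [f1, f2, f3, g2, g3, g4, h1, h2, h3, h4, h5s, h7s, h6]

end SpiceAux

namespace SpiceAux

variable {m k : Type*} [Fintype m] [Fintype k]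

lemma trace_vecMulVec_mul (a b : m → ℝ) (M : Matrix m m ℝ) :
    (vecMulVec a b * M).trace = b ⬝ᵥ (M *ᵥ a) := by
  simp only [Matrix.trace, Matrix.diag_apply, Matrix.mul_apply, vecMulVec_apply,
    dotProduct, mulVec, Finset.mul_sum]
  rw [Finset.sum_comm]
  exact Finset.sum_congr rfl fun j _ => Finset.sum_congr rfl fun i _ => by ring

lemma vecMulVec_mulVec (a b x : m → ℝ) :
    vecMulVec a b *ᵥ x = (b ⬝ᵥ x) • a := by
  ext i
  simp only [mulVec, vecMulVec_apply, dotProduct, Pi.smul_apply, smul_eq_mul,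
    Finset.sum_mul, Finset.mul_sum]
  exact Finset.sum_congr rfl fun j _ => by ring

lemma vecMulVec_transpose' (a b : m → ℝ) :
    (vecMulVec a b)ᵀ = vecMulVec b a := by
  ext i j
  simp [vecMulVec_apply, mul_comm]

/-- The SPICE covariance-fitting identity:
`W = ‖y‖² yᵀN†y − 2‖y‖² + tr N` when `y ∈ range N`. -/
lemma wcrit_identity {N B : Matrix m m ℝ} {y : m → ℝ}
    (hNs : Nᵀ = N) (hBs : Bᵀ = B) (hB : IsMoorePenrose N B)
    (hyr : N *ᵥ (B *ᵥ y) = y) :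
    ((vecMulVec y y - N)ᵀ * B * (vecMulVec y y - N)).trace
      = (y ⬝ᵥ y) * (y ⬝ᵥ B *ᵥ y) - 2 * (y ⬝ᵥ y) + N.trace := by
  have hYs : (vecMulVec y y)ᵀ = vecMulVec y y := vecMulVec_transpose' y y
  have expand : (vecMulVec y y - N)ᵀ * B * (vecMulVec y y - N)
      = vecMulVec y y * B * vecMulVec y y - vecMulVec y y * B * N
        - N * B * vecMulVec y y + N * B * N := by
    rw [transpose_sub, hYs, hNs]
    noncomm_ring
  have hT1 : (vecMulVec y y * B * vecMulVec y y).trace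
      = (y ⬝ᵥ y) * (y ⬝ᵥ B *ᵥ y) := by
    rw [Matrix.mul_assoc, trace_vecMulVec_mul, ← mulVec_mulVec, vecMulVec_mulVec,
      mulVec_smul, dotProduct_smul, smul_eq_mul]
  have hT2 : (N * B * vecMulVec y y).trace = y ⬝ᵥ y := by
    rw [trace_mul_comm, trace_vecMulVec_mul, ← mulVec_mulVec, hyr]
  have hT3 : (vecMulVec y y * B * N).trace = y ⬝ᵥ y := by
    rw [Matrix.mul_assoc, trace_vecMulVec_mul, ← mulVec_mulVec,
      dotProduct_comm, mulVec_dot, hBs]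
    rw [mulVec_dot, hNs, hyr]
  have hT4 : (N * B * N).trace = N.trace := by rw [hB.1]
  rw [expand, trace_add, trace_sub, trace_sub, hT1, hT2, hT3, hT4]
  ring

end SpiceAux

namespace SpiceAux

variable {m k : Type*} [Fintype m] [Fintype k]

lemma nbn_fix {N B : Matrix m m ℝ} (hB : IsMoorePenrose N B) {y : m → ℝ}
    (h : y ∈ Set.range N.mulVec) : N *ᵥ (B *ᵥ y) = y := by
  obtain ⟨u, rfl⟩ := h
  show N *ᵥ (B *ᵥ (N *ᵥ u)) = N *ᵥ u
  simp only [mulVec_mulVec]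
  rw [← Matrix.mul_assoc, hB.1]

end SpiceAux

/-- If `W` is minimized by some feasible pair in `𝒮`, `β_G` minimizes `G`, and the
infimum defining `G(β_G)` is attained at `(D_G, V_G)`, then `(D_G, V_G)` minimizes
`W` over the feasible pairs and `β_G = D_G Xᵀ N(D_G,V_G)† y`. -/
theorem stmt11 {n d : ℕ} (y : Fin n → ℝ) (hy0 : y ≠ 0)
    (X : Matrix (Fin n) (Fin d) ℝ)
    (S : Set (Matrix (Fin d) (Fin d) ℝ × Matrix (Fin n) (Fin n) ℝ))
    (hS : ∀ p ∈ S, p.1.PosSemidef ∧ p.2.PosSemidef)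
    (pinvd : Matrix (Fin d) (Fin d) ℝ → Matrix (Fin d) (Fin d) ℝ)
    (pinvn : Matrix (Fin n) (Fin n) ℝ → Matrix (Fin n) (Fin n) ℝ)
    (hpinvd : ∀ A : Matrix (Fin d) (Fin d) ℝ, A.PosSemidef →
      IsMoorePenrose A (pinvd A))
    (hpinvn : ∀ A : Matrix (Fin n) (Fin n) ℝ, A.PosSemidef →
      IsMoorePenrose A (pinvn A))
    (Ds : Matrix (Fin d) (Fin d) ℝ) (Vs : Matrix (Fin n) (Fin n) ℝ)
    (hmem : (Ds, Vs) ∈ S)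
    (hfeas : y ∈ Set.range (Nmat X (Ds, Vs)).mulVec)
    (hmin : ∀ p ∈ S, y ∈ Set.range (Nmat X p).mulVec →
      Wcrit y X pinvn (Ds, Vs) ≤ Wcrit y X pinvn p)
    (βG : Fin d → ℝ)
    (hβG : ∀ β : Fin d → ℝ, Gfun y X pinvd pinvn S βG ≤ Gfun y X pinvd pinvn S β)
    (DG : Matrix (Fin d) (Fin d) ℝ) (VG : Matrix (Fin n) (Fin n) ℝ)
    (hGmem : (DG, VG) ∈ S) (hGTheta : βG ∈ Theta y X (DG, VG))
    (hGatt : (Jcost y X pinvd pinvn (DG, VG) βG : EReal) =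
      Gfun y X pinvd pinvn S βG) :
    (∀ p ∈ S, y ∈ Set.range (Nmat X p).mulVec →
        Wcrit y X pinvn (DG, VG) ≤ Wcrit y X pinvn p) ∧
      βG = (DG * Xᵀ * pinvn (Nmat X (DG, VG))).mulVec y := by
  classical
  have hDGpsd : DG.PosSemidef := (hS _ hGmem).1
  have hVGpsd : VG.PosSemidef := (hS _ hGmem).2
  have hDspsd : Ds.PosSemidef := (hS _ hmem).1
  have hVspsd : Vs.PosSemidef := (hS _ hmem).2
  set c : ℝ := y ⬝ᵥ y with hcdef
  have hc : 0 < c := by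
    rcases lt_or_eq_of_le (by
      simpa [hcdef, dotProduct] using Finset.sum_nonneg
        fun i _ => mul_self_nonneg (y i) : (0:ℝ) ≤ c) with h | h
    · exact h
    · exact absurd (dotProduct_self_eq_zero.mp h.symm) hy0
  -- the two N matrices and their pseudoinverses
  have hNGpsd : (X * DG * Xᵀ + VG).PosSemidef :=
    (SpiceAux.psd_mul_mul hDGpsd).add hVGpsd
  have hNspsd : (X * Ds * Xᵀ + Vs).PosSemidef :=
    (SpiceAux.psd_mul_mul hDspsd).add hVspsd
  set BG : Matrix (Fin n) (Fin n) ℝ := pinvn (X * DG * Xᵀ + VG) with hBGdef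
  set Bs : Matrix (Fin n) (Fin n) ℝ := pinvn (X * Ds * Xᵀ + Vs) with hBsdef
  have hBGmp : IsMoorePenrose (X * DG * Xᵀ + VG) BG := hpinvn _ hNGpsd
  have hBsmp : IsMoorePenrose (X * Ds * Xᵀ + Vs) Bs := hpinvn _ hNspsd
  have hNGeq : Nmat X (DG, VG) = X * DG * Xᵀ + VG := rfl
  have hNseq : Nmat X (Ds, Vs) = X * Ds * Xᵀ + Vs := rfl
  -- feasibility fixed points
  have hyrS : (X * Ds * Xᵀ + Vs) *ᵥ (Bs *ᵥ y) = y :=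
    SpiceAux.nbn_fix hBsmp (by rwa [hNseq] at hfeas)
  obtain ⟨hGT1, hGT2⟩ := hGTheta
  obtain ⟨uG, huG'⟩ := hGT1
  obtain ⟨wG, hwG'⟩ := hGT2
  have huG : VG *ᵥ uG = y - X *ᵥ βG := huG'
  have hwG : DG *ᵥ wG = βG := hwG'
  have hyrG : (X * DG * Xᵀ + VG) *ᵥ (BG *ᵥ y) = y := by
    have h1 : (X * DG * Xᵀ + VG) *ᵥ (BG *ᵥ (y - X *ᵥ βG)) = y - X *ᵥ βG :=
      SpiceAux.proj_fixes hDGpsd hVGpsd hBGmp (Or.inl ⟨uG, huG⟩)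
    have h2 : (X * DG * Xᵀ + VG) *ᵥ (BG *ᵥ (X *ᵥ βG)) = X *ᵥ βG :=
      SpiceAux.proj_fixes hDGpsd hVGpsd hBGmp (Or.inr ⟨wG, by rw [hwG]⟩)
    have h3 : y = (y - X *ᵥ βG) + X *ᵥ βG := by abel
    calc (X * DG * Xᵀ + VG) *ᵥ (BG *ᵥ y)
        = (X * DG * Xᵀ + VG) *ᵥ (BG *ᵥ ((y - X *ᵥ βG) + X *ᵥ βG)) := by rw [← h3]
      _ = (X * DG * Xᵀ + VG) *ᵥ (BG *ᵥ (y - X *ᵥ βG))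
            + (X * DG * Xᵀ + VG) *ᵥ (BG *ᵥ (X *ᵥ βG)) := by
          rw [mulVec_add, mulVec_add]
      _ = y := by rw [h1, h2, ← h3]
  have hyfeasG : y ∈ Set.range (Nmat X (DG, VG)).mulVec := by
    rw [hNGeq]; exact ⟨BG *ᵥ y, hyrG⟩
  -- W values for feasible pairs
  have Wval : ∀ p ∈ S, y ∈ Set.range (Nmat X p).mulVec →
      Wcrit y X pinvn p
        = c * (y ⬝ᵥ (pinvn (Nmat X p)) *ᵥ y) - 2 * c + (Nmat X p).trace := by
    intro p hp hyp
    obtain ⟨hd, hv⟩ := hS p hp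
    have hNpsd : (Nmat X p).PosSemidef := (SpiceAux.psd_mul_mul hd).add hv
    have hBmp := hpinvn _ hNpsd
    have hBsym := SpiceAux.pinv_symm (SpiceAux.psd_symm hNpsd) hBmp
    have hyr := SpiceAux.nbn_fix hBmp hyp
    exact SpiceAux.wcrit_identity (SpiceAux.psd_symm hNpsd) hBsym hBmp hyr
  -- shorthand scalars
  set mG : ℝ := y ⬝ᵥ BG *ᵥ y with hmGdef
  set ms : ℝ := y ⬝ᵥ Bs *ᵥ y with hmsdef
  set tG : ℝ := (X * DG * Xᵀ + VG).trace with htGdef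
  set ts : ℝ := (X * Ds * Xᵀ + Vs).trace with htsdef
  -- quadratic identity at βG
  have qidG := SpiceAux.quad_identity hDGpsd hVGpsd (hpinvd DG hDGpsd)
    (hpinvn VG hVGpsd) hyrG huG hwG
  have hQ1 : 0 ≤ (X *ᵥ (βG - DG *ᵥ (Xᵀ *ᵥ (BG *ᵥ y)))) ⬝ᵥ
      (pinvn VG) *ᵥ (X *ᵥ (βG - DG *ᵥ (Xᵀ *ᵥ (BG *ᵥ y)))) :=
    SpiceAux.qf_nonneg (SpiceAux.pinv_psd hVGpsd (hpinvn VG hVGpsd)) _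
  have hQ2 : 0 ≤ (βG - DG *ᵥ (Xᵀ *ᵥ (BG *ᵥ y))) ⬝ᵥ
      (pinvd DG) *ᵥ (βG - DG *ᵥ (Xᵀ *ᵥ (BG *ᵥ y))) :=
    SpiceAux.qf_nonneg (SpiceAux.pinv_psd hDGpsd (hpinvd DG hDGpsd)) _
  have hJGdef : Jcost y X pinvd pinvn (DG, VG) βG
      = (y - X *ᵥ βG) ⬝ᵥ (pinvn VG) *ᵥ (y - X *ᵥ βG)
        + βG ⬝ᵥ (pinvd DG) *ᵥ βG + tG / c := rfl
  -- the candidate minimizer for (Ds, Vs)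
  set βs : Fin d → ℝ := Ds *ᵥ (Xᵀ *ᵥ (Bs *ᵥ y)) with hβsdef
  have h5s : X *ᵥ (Ds *ᵥ (Xᵀ *ᵥ (Bs *ᵥ y))) = y - Vs *ᵥ (Bs *ᵥ y) := by
    have h := hyrS
    rw [add_mulVec] at h
    rw [mulVec_mulVec, mulVec_mulVec, eq_sub_iff_add_eq]
    exact h
  have hus : Vs *ᵥ (Bs *ᵥ y) = y - X *ᵥ βs := by
    rw [hβsdef, h5s]; abel
  have hβsTheta : βs ∈ Theta y X (Ds, Vs) :=
    ⟨⟨Bs *ᵥ y, hus⟩, ⟨Xᵀ *ᵥ (Bs *ᵥ y), rfl⟩⟩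
  have qidS := SpiceAux.quad_identity hDspsd hVspsd (hpinvd Ds hDspsd)
    (hpinvn Vs hVspsd) hyrS hus (rfl : Ds *ᵥ (Xᵀ *ᵥ (Bs *ᵥ y)) = βs)
  have hJsval : Jcost y X pinvd pinvn (Ds, Vs) βs = ms + ts / c := by
    have : Jcost y X pinvd pinvn (Ds, Vs) βs
        = (y - X *ᵥ βs) ⬝ᵥ (pinvn Vs) *ᵥ (y - X *ᵥ βs)
          + βs ⬝ᵥ (pinvd Ds) *ᵥ βs + ts / c := rfl
    rw [this]
    rw [show βs - Ds *ᵥ (Xᵀ *ᵥ (Bs *ᵥ y)) = 0 from sub_self βs] at qidS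
    simp only [mulVec_zero, dotProduct_zero, add_zero] at qidS
    rw [qidS]
  -- EReal chain: JG ≤ Js
  have hJGle : Jcost y X pinvd pinvn (DG, VG) βG
      ≤ Jcost y X pinvd pinvn (Ds, Vs) βs := by
    have h1 : Gfun y X pinvd pinvn S βG ≤ Gfun y X pinvd pinvn S βs := hβG βs
    have h2 : Gfun y X pinvd pinvn S βs
        ≤ ((Jcost y X pinvd pinvn (Ds, Vs) βs : ℝ) : EReal) :=
      sInf_le ⟨(Ds, Vs), hmem, hβsTheta, rfl⟩
    have h3 : ((Jcost y X pinvd pinvn (DG, VG) βG : ℝ) : EReal)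
        ≤ ((Jcost y X pinvd pinvn (Ds, Vs) βs : ℝ) : EReal) := by
      rw [hGatt]; exact h1.trans h2
    exact_mod_cast h3
  -- W comparison gives ms + ts/c ≤ mG + tG/c
  have WvalG : Wcrit y X pinvn (DG, VG) = c * mG - 2 * c + tG :=
    Wval _ hGmem hyfeasG
  have WvalS : Wcrit y X pinvn (Ds, Vs) = c * ms - 2 * c + ts :=
    Wval _ hmem hfeas
  have hWGs' : c * ms - 2 * c + ts ≤ c * mG - 2 * c + tG := by
    rw [← WvalS, ← WvalG]
    exact hmin (DG, VG) hGmem hyfeasG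
  have hms_le : ms + ts / c ≤ mG + tG / c := by
    have h2 : (c * ms + ts) / c ≤ (c * mG + tG) / c :=
      div_le_div_of_nonneg_right (by linarith) hc.le
    have hcne : c ≠ 0 := hc.ne'
    calc ms + ts / c = (c * ms + ts) / c := by
          field_simp
      _ ≤ (c * mG + tG) / c := h2
      _ = mG + tG / c := by
          field_simp
  -- chain of inequalities forces equalities
  have hlow : mG + tG / c ≤ Jcost y X pinvd pinvn (DG, VG) βG := by
    rw [hJGdef, qidG]
    linarith
  have hJseq : Jcost y X pinvd pinvn (Ds, Vs) βs = ms + ts / c := hJsval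
  have keyeq : mG + tG / c = ms + ts / c := by
    rw [hJseq] at hJGle
    linarith
  have e2 : c * mG + tG = c * ms + ts := by
    have h := keyeq
    field_simp at h
    linarith
  constructor
  · intro p hp hyp
    have h1 := hmin p hp hyp
    rw [WvalS] at h1
    rw [WvalG]
    linarith
  · -- equality case: the quadratic remainder vanishes
    have hJGeq : Jcost y X pinvd pinvn (DG, VG) βG = mG + tG / c := by
      rw [hJseq] at hJGle
      linarith
    have hsum0 : (X *ᵥ (βG - DG *ᵥ (Xᵀ *ᵥ (BG *ᵥ y)))) ⬝ᵥ
          (pinvn VG) *ᵥ (X *ᵥ (βG - DG *ᵥ (Xᵀ *ᵥ (BG *ᵥ y))))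
        + (βG - DG *ᵥ (Xᵀ *ᵥ (BG *ᵥ y))) ⬝ᵥ
          (pinvd DG) *ᵥ (βG - DG *ᵥ (Xᵀ *ᵥ (BG *ᵥ y))) = 0 := by
      rw [hJGdef, qidG] at hJGeq
      linarith
    have hQ2zero : (βG - DG *ᵥ (Xᵀ *ᵥ (BG *ᵥ y))) ⬝ᵥ
        (pinvd DG) *ᵥ (βG - DG *ᵥ (Xᵀ *ᵥ (BG *ᵥ y))) = 0 := by linarith
    have hδ : βG - DG *ᵥ (Xᵀ *ᵥ (BG *ᵥ y)) = DG *ᵥ (wG - Xᵀ *ᵥ (BG *ᵥ y)) := by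
      rw [mulVec_sub, hwG]
    rw [hδ] at hQ2zero
    rw [SpiceAux.sandwich (SpiceAux.psd_symm hDGpsd) (hpinvd DG hDGpsd)] at hQ2zero
    have hDz : DG *ᵥ (wG - Xᵀ *ᵥ (BG *ᵥ y)) = 0 :=
      SpiceAux.qf_zero hDGpsd hQ2zero
    have hfin : βG = DG *ᵥ (Xᵀ *ᵥ (BG *ᵥ y)) :=
      sub_eq_zero.mp (hδ.trans hDz)
    rw [hfin, hNGeq]
    rw [show (DG * Xᵀ * BG) *ᵥ y = DG *ᵥ (Xᵀ *ᵥ (BG *ᵥ y)) by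
      rw [← mulVec_mulVec, ← mulVec_mulVec]]
end

section
/- Let y ∈ ℝⁿ with y ≠ 0, X an n×d real matrix, and β ∈ ℝᵈ. Then the infimum, over all diagonal positive semidefinite matrices D = diag(c₁,…,c_d) and V = diag(v₁,…,v_n) such that y − Xβ ∈ range(V) and β ∈ range(D), of (y − Xβ)ᵀ V† (y − Xβ) + βᵀ D† β + tr(X D Xᵀ + V)/‖y‖₂² equals (2n/‖y‖₂) · ( MAD(β) + (1/√n) Σⱼ √(Ĉⱼⱼ) |βⱼ| ), where MAD(β) = ‖y − Xβ‖₁/n and Ĉ = XᵀX/n with diagonal entries Ĉⱼⱼ. Consequently, minimizing this infimum over β is equivalent to minimizing the ℓ₁-penalized least absolute deviation criterion MAD(β) + λ Σⱼ √(Ĉⱼⱼ)|βⱼ| with the tuned regularization parameter λ = 1/√n. -/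
open Matrix

lemma mem_range_diag {m : ℕ} (v x : Fin m → ℝ) :
    x ∈ Set.range (Matrix.diagonal v).mulVec ↔ ∀ i, v i = 0 → x i = 0 := by
  constructor
  · rintro ⟨w, rfl⟩ i hi
    simp [Matrix.mulVec_diagonal, hi]
  · intro h
    refine ⟨fun i => (v i)⁻¹ * x i, ?_⟩
    funext i
    simp only [Matrix.mulVec_diagonal]
    rcases eq_or_ne (v i) 0 with h0 | h0
    · simp [h0, h i h0]
    · field_simp

lemma clem {b c q S : ℝ} (hS : 0 < S) (hc : 0 ≤ c) (hq : 0 ≤ q) (h0 : c = 0 → b = 0) :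
    2 * (Real.sqrt q * |b|) / Real.sqrt S ≤ b ^ 2 * c⁻¹ + c * q / S := by
  rcases eq_or_lt_of_le hc with h | h
  · simp [← h, h0 h.symm]
  · have hs : 0 < Real.sqrt S := Real.sqrt_pos.2 hS
    have hu : 0 < c⁻¹ := inv_pos.2 h
    have hcu : c * c⁻¹ = 1 := mul_inv_cancel₀ h.ne'
    have hSS : Real.sqrt S * Real.sqrt S = S := Real.mul_self_sqrt hS.le
    have key := mul_nonneg hu.le (sq_nonneg (|b| - c * Real.sqrt q * (Real.sqrt S)⁻¹))
    have hqq : Real.sqrt q * Real.sqrt q = q := Real.mul_self_sqrt hq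
    have hbb : |b| * |b| = b ^ 2 := by rw [← abs_mul, abs_mul_self, sq]
    have hSinv : S⁻¹ = (Real.sqrt S)⁻¹ * (Real.sqrt S)⁻¹ := by
      rw [← mul_inv, hSS]
    have expand : c⁻¹ * (|b| - c * Real.sqrt q * (Real.sqrt S)⁻¹) ^ 2
        = (|b| * |b|) * c⁻¹ - 2 * (Real.sqrt q * |b|) * (Real.sqrt S)⁻¹
          + c * (Real.sqrt q * Real.sqrt q) * ((Real.sqrt S)⁻¹ * (Real.sqrt S)⁻¹) := by
      linear_combination (-2 * |b| * Real.sqrt q * (Real.sqrt S)⁻¹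
        + c * (Real.sqrt q * Real.sqrt q) * ((Real.sqrt S)⁻¹ * (Real.sqrt S)⁻¹)) * hcu
    have hb2 : (|b| * |b|) * c⁻¹ = b ^ 2 * c⁻¹ := by rw [hbb]
    have hq2 : c * (Real.sqrt q * Real.sqrt q) * ((Real.sqrt S)⁻¹ * (Real.sqrt S)⁻¹)
        = c * q * ((Real.sqrt S)⁻¹ * (Real.sqrt S)⁻¹) := by rw [hqq]
    rw [div_eq_mul_inv, div_eq_mul_inv, ← sub_nonneg, hSinv]
    linarith [key, expand.le, expand.ge]

lemma vexact {a S : ℝ} (hS : 0 < S) :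
    a ^ 2 * (|a| * Real.sqrt S)⁻¹ + (|a| * Real.sqrt S) / S = 2 * |a| / Real.sqrt S := by
  have hs : 0 < Real.sqrt S := Real.sqrt_pos.2 hS
  have hSS : Real.sqrt S * Real.sqrt S = S := Real.mul_self_sqrt hS.le
  rcases eq_or_ne a 0 with rfl | ha
  · simp
  · have ha' : 0 < |a| := abs_pos.2 ha
    have hbb : |a| * |a| = a ^ 2 := by rw [← abs_mul, abs_mul_self, sq]
    rw [← hSS]
    field_simp
    rw [Real.sqrt_sq hs.le]
    linear_combination (-(Real.sqrt S ^ 2)) * hbb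

lemma cexact {b q S : ℝ} (hS : 0 < S) (hq : 0 < q) :
    b ^ 2 * (|b| * Real.sqrt S / Real.sqrt q)⁻¹ + (|b| * Real.sqrt S / Real.sqrt q) * q / S
      = 2 * (Real.sqrt q * |b|) / Real.sqrt S := by
  have hs : 0 < Real.sqrt S := Real.sqrt_pos.2 hS
  have hsq : 0 < Real.sqrt q := Real.sqrt_pos.2 hq
  have hSS : Real.sqrt S * Real.sqrt S = S := Real.mul_self_sqrt hS.le
  have hqq : Real.sqrt q * Real.sqrt q = q := Real.mul_self_sqrt hq.le
  rcases eq_or_ne b 0 with rfl | hb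
  · simp
  · have hb' : 0 < |b| := abs_pos.2 hb
    have hbb : |b| * |b| = b ^ 2 := by rw [← abs_mul, abs_mul_self, sq]
    rw [← hSS, ← hqq]
    field_simp
    rw [Real.sqrt_sq hs.le, Real.sqrt_sq hsq.le]
    linear_combination (-(Real.sqrt S ^ 2 * Real.sqrt q ^ 2)) * hbb

lemma expr_eq {n d : ℕ} (y : Fin n → ℝ) (X : Matrix (Fin n) (Fin d) ℝ)
    (β : Fin d → ℝ) (c : Fin d → ℝ) (v : Fin n → ℝ) :
    (y - X.mulVec β) ⬝ᵥ
        (Matrix.diagonal fun i => (v i)⁻¹).mulVec (y - X.mulVec β) +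
      β ⬝ᵥ (Matrix.diagonal fun j => (c j)⁻¹).mulVec β +
      (X * Matrix.diagonal c * Xᵀ + Matrix.diagonal v).trace / (y ⬝ᵥ y)
    = (∑ i, (((y - X.mulVec β) i) ^ 2 * (v i)⁻¹ + v i / (y ⬝ᵥ y))) +
      ∑ j, ((β j) ^ 2 * (c j)⁻¹ + c j * (Xᵀ * X) j j / (y ⬝ᵥ y)) := by
  have htr : (X * Matrix.diagonal c * Xᵀ).trace = ∑ j, c j * (Xᵀ * X) j j := by
    rw [Matrix.trace_mul_comm, ← Matrix.mul_assoc]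
    simp only [Matrix.trace, Matrix.diag, Matrix.mul_diagonal]
    exact Finset.sum_congr rfl fun j _ => mul_comm _ _
  set S := y ⬝ᵥ y with hSdef
  rw [Matrix.trace_add, htr, Matrix.trace_diagonal]
  simp only [dotProduct, Matrix.mulVec_diagonal]
  rw [add_div, Finset.sum_div, Finset.sum_div, Finset.sum_add_distrib, Finset.sum_add_distrib]
  ring_nf
  rw [Finset.sum_congr rfl fun x _ =>
    (by ring : S⁻¹ * c x * (Xᵀ * X) x x = c x * (Xᵀ * X) x x * S⁻¹)]
  ring

/-- The inner infimum over diagonal PSD matrices `D = diag(c)`, `V = diag(v)` with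
`y − Xβ ∈ range(V)` and `β ∈ range(D)` of
`(y − Xβ)ᵀ V† (y − Xβ) + βᵀ D† β + tr(X D Xᵀ + V)/‖y‖₂²`
(the pseudoinverse of `diag(a)` with nonnegative entries is entrywise inversion,
with `0† = 0`). -/
noncomputable def innerInf {n d : ℕ} (y : Fin n → ℝ)
    (X : Matrix (Fin n) (Fin d) ℝ) (β : Fin d → ℝ) : ℝ :=
  sInf {r : ℝ | ∃ (c : Fin d → ℝ) (v : Fin n → ℝ),
    (∀ j, 0 ≤ c j) ∧ (∀ i, 0 ≤ v i) ∧
    y - X.mulVec β ∈ Set.range (Matrix.diagonal v).mulVec ∧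
    β ∈ Set.range (Matrix.diagonal c).mulVec ∧
    r = (y - X.mulVec β) ⬝ᵥ
        (Matrix.diagonal fun i => (v i)⁻¹).mulVec (y - X.mulVec β) +
      β ⬝ᵥ (Matrix.diagonal fun j => (c j)⁻¹).mulVec β +
      (X * Matrix.diagonal c * Xᵀ + Matrix.diagonal v).trace / (y ⬝ᵥ y)}

/-- The ℓ₁-penalized least absolute deviation criterion
`MAD(β) + λ Σⱼ √(Ĉⱼⱼ)|βⱼ|` with the tuned `λ = 1/√n`, where `Ĉ = XᵀX/n`. -/
noncomputable def ladCrit {n d : ℕ} (y : Fin n → ℝ)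
    (X : Matrix (Fin n) (Fin d) ℝ) (β : Fin d → ℝ) : ℝ :=
  (∑ i, |(y - X.mulVec β) i|) / n +
    (1 / Real.sqrt n) *
      ∑ j, Real.sqrt (((1 / (n : ℝ)) • (Xᵀ * X)) j j) * |β j|

lemma qnonneg {n d : ℕ} (X : Matrix (Fin n) (Fin d) ℝ) (j : Fin d) : 0 ≤ (Xᵀ * X) j j := by
  rw [Matrix.mul_apply]
  exact Finset.sum_nonneg fun i _ => by
    simp only [Matrix.transpose_apply]; exact mul_self_nonneg _

lemma key {n d : ℕ} (y : Fin n → ℝ) (hy0 : y ≠ 0) (X : Matrix (Fin n) (Fin d) ℝ)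
    (β : Fin d → ℝ) :
    innerInf y X β = 2 / Real.sqrt (y ⬝ᵥ y) *
      ((∑ i, |(y - X.mulVec β) i|) + ∑ j, Real.sqrt ((Xᵀ * X) j j) * |β j|) := by
  have hSnn : 0 ≤ y ⬝ᵥ y := Finset.sum_nonneg fun i _ => mul_self_nonneg _
  have hS : 0 < y ⬝ᵥ y := lt_of_le_of_ne hSnn fun h => hy0 (dotProduct_self_eq_zero.1 h.symm)
  set S := y ⬝ᵥ y with hSdef
  have hs : 0 < Real.sqrt S := Real.sqrt_pos.2 hS
  set r := y - X.mulVec β with hrdef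
  set q : Fin d → ℝ := fun j => (Xᵀ * X) j j with hqdef
  have hq : ∀ j, 0 ≤ q j := fun j => qnonneg X j
  set val := 2 / Real.sqrt S * ((∑ i, |r i|) + ∑ j, Real.sqrt (q j) * |β j|) with hvaldef
  have hval : val = (∑ i, 2 * |r i| / Real.sqrt S)
      + ∑ j, 2 * (Real.sqrt (q j) * |β j|) / Real.sqrt S := by
    rw [hvaldef, mul_add, Finset.mul_sum, Finset.mul_sum]
    congr 1 <;> exact Finset.sum_congr rfl fun _ _ => by ring
  have witness : ∀ t : ℝ, 0 < t → ∃ a ∈ {r' : ℝ | ∃ (c : Fin d → ℝ) (v : Fin n → ℝ),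
      (∀ j, 0 ≤ c j) ∧ (∀ i, 0 ≤ v i) ∧
      y - X.mulVec β ∈ Set.range (Matrix.diagonal v).mulVec ∧
      β ∈ Set.range (Matrix.diagonal c).mulVec ∧
      r' = (y - X.mulVec β) ⬝ᵥ
          (Matrix.diagonal fun i => (v i)⁻¹).mulVec (y - X.mulVec β) +
        β ⬝ᵥ (Matrix.diagonal fun j => (c j)⁻¹).mulVec β +
        (X * Matrix.diagonal c * Xᵀ + Matrix.diagonal v).trace / (y ⬝ᵥ y)},
      a ≤ val + d * t⁻¹ := by
    intro t ht
    set v : Fin n → ℝ := fun i => |r i| * Real.sqrt S with hvdef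
    set c : Fin d → ℝ := fun j =>
      if q j = 0 then t * (β j) ^ 2 else |β j| * Real.sqrt S / Real.sqrt (q j) with hcdef
    have hcnn : ∀ j, 0 ≤ c j := by
      intro j
      rw [hcdef]
      dsimp only
      split
      · positivity
      · positivity
    have hvnn : ∀ i, 0 ≤ v i := fun i => mul_nonneg (abs_nonneg _) hs.le
    have hrng_v : y - X.mulVec β ∈ Set.range (Matrix.diagonal v).mulVec := by
      rw [mem_range_diag]
      intro i hi
      rw [hvdef] at hi
      rcases mul_eq_zero.1 hi with h | h
      · exact abs_eq_zero.1 h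
      · exact absurd h hs.ne'
    have hrng_c : β ∈ Set.range (Matrix.diagonal c).mulVec := by
      rw [mem_range_diag]
      intro j hj
      rw [hcdef] at hj
      dsimp only at hj
      split at hj
      · rcases mul_eq_zero.1 hj with h | h
        · exact absurd h ht.ne'
        · exact pow_eq_zero_iff two_ne_zero |>.1 h
      · rename_i hqj
        have hsq : 0 < Real.sqrt (q j) := Real.sqrt_pos.2 (lt_of_le_of_ne (hq j) (Ne.symm hqj))
        rcases mul_eq_zero.1 ((div_eq_zero_iff.1 hj).resolve_right hsq.ne') with h | h
        · exact abs_eq_zero.1 h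
        · exact absurd h hs.ne'
    refine ⟨_, ⟨c, v, hcnn, hvnn, hrng_v, hrng_c, rfl⟩, ?_⟩
    rw [expr_eq, ← hrdef, ← hSdef, hval]
    have hiterm : ∀ i, (r i) ^ 2 * (v i)⁻¹ + v i / S = 2 * |r i| / Real.sqrt S :=
      fun i => vexact hS
    have hjterm : ∀ j, (β j) ^ 2 * (c j)⁻¹ + c j * q j / S
        ≤ 2 * (Real.sqrt (q j) * |β j|) / Real.sqrt S + t⁻¹ := by
      intro j
      rw [hcdef]
      dsimp only
      rcases eq_or_ne (q j) 0 with hqj | hqj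
      · rw [if_pos hqj, hqj]
        rcases eq_or_ne (β j) 0 with hb | hb
        · simp [hb]
          positivity
        · have h1 : (β j) ^ 2 * (t * (β j) ^ 2)⁻¹ = t⁻¹ := by
            rw [mul_inv]
            field_simp
          rw [h1]
          simp
      · rw [if_neg hqj]
        have hqj' : 0 < q j := lt_of_le_of_ne (hq j) (Ne.symm hqj)
        rw [cexact hS hqj']
        simp [inv_nonneg.2 ht.le]
    calc (∑ i, ((r i) ^ 2 * (v i)⁻¹ + v i / S)) + ∑ j, ((β j) ^ 2 * (c j)⁻¹ + c j * q j / S)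
        ≤ (∑ i, 2 * |r i| / Real.sqrt S)
          + ∑ j, (2 * (Real.sqrt (q j) * |β j|) / Real.sqrt S + t⁻¹) := by
          refine add_le_add (le_of_eq (Finset.sum_congr rfl fun i _ => hiterm i))
            (Finset.sum_le_sum fun j _ => hjterm j)
      _ = (∑ i, 2 * |r i| / Real.sqrt S)
          + ((∑ j, 2 * (Real.sqrt (q j) * |β j|) / Real.sqrt S) + d * t⁻¹) := by
          rw [Finset.sum_add_distrib, Finset.sum_const, Finset.card_univ, Fintype.card_fin,
            nsmul_eq_mul]
      _ = _ := by ring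
  rw [innerInf]
  apply csInf_eq_of_forall_ge_of_forall_gt_exists_lt
  · obtain ⟨a, ha, _⟩ := witness 1 one_pos
    exact ⟨a, ha⟩
  · rintro a ⟨c, v, hcnn, hvnn, hrv, hrc, rfl⟩
    rw [expr_eq, ← hrdef, ← hSdef, hval]
    rw [mem_range_diag] at hrv hrc
    gcongr with i _ j _
    · have h2 := clem (b := r i) (c := v i) (q := 1) hS (hvnn i) zero_le_one (hrv i)
      rw [Real.sqrt_one, one_mul, mul_one] at h2
      exact h2
    · exact clem hS (hcnn j) (hq j) (hrc j)
  · intro w hw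
    have hwv : (0:ℝ) < w - val := sub_pos.2 hw
    obtain ⟨a, ha, hle⟩ := witness ((d + 1) / (w - val)) (div_pos (by positivity) hwv)
    refine ⟨a, ha, lt_of_le_of_lt hle ?_⟩
    rw [inv_div]
    have h1 : (d : ℝ) * ((w - val) / (d + 1)) < w - val := by
      rw [mul_div_assoc', div_lt_iff₀ (by positivity)]
      nlinarith
    linarith

/-- The inner infimum equals `(2n/‖y‖₂)(MAD(β) + (1/√n) Σⱼ √(Ĉⱼⱼ)|βⱼ|)`;
consequently minimizing it over `β` is equivalent to minimizing the ℓ₁-penalized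
least absolute deviation criterion with tuned `λ = 1/√n`. -/
theorem stmt18 {n d : ℕ} (y : Fin n → ℝ) (hy0 : y ≠ 0)
    (X : Matrix (Fin n) (Fin d) ℝ) :
    (∀ β : Fin d → ℝ,
      innerInf y X β = 2 * n / Real.sqrt (y ⬝ᵥ y) * ladCrit y X β) ∧
    (∀ β : Fin d → ℝ,
      (∀ γ : Fin d → ℝ, innerInf y X β ≤ innerInf y X γ) ↔
        (∀ γ : Fin d → ℝ, ladCrit y X β ≤ ladCrit y X γ)) := by
  have hSnn : 0 ≤ y ⬝ᵥ y := Finset.sum_nonneg fun i _ => mul_self_nonneg _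
  have hS : 0 < y ⬝ᵥ y := lt_of_le_of_ne hSnn fun h => hy0 (dotProduct_self_eq_zero.1 h.symm)
  have hs : 0 < Real.sqrt (y ⬝ᵥ y) := Real.sqrt_pos.2 hS
  have hn : 0 < n := by
    rcases Nat.eq_zero_or_pos n with rfl | h
    · exact absurd (funext fun i => i.elim0) hy0
    · exact h
  have hn' : (n : ℝ) ≠ 0 := Nat.cast_ne_zero.2 hn.ne'
  have hsn : 0 < Real.sqrt n := Real.sqrt_pos.2 (by exact_mod_cast hn)
  have hnn : Real.sqrt n * Real.sqrt n = n := Real.mul_self_sqrt (Nat.cast_nonneg n)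
  have hmain : ∀ β : Fin d → ℝ,
      innerInf y X β = 2 * n / Real.sqrt (y ⬝ᵥ y) * ladCrit y X β := by
    intro β
    rw [key y hy0 X β, ladCrit]
    have h1 : ∀ j : Fin d, Real.sqrt (((1 / (n : ℝ)) • (Xᵀ * X)) j j)
        = Real.sqrt ((Xᵀ * X) j j) / Real.sqrt n := by
      intro j
      rw [Matrix.smul_apply, smul_eq_mul, one_div, inv_mul_eq_div,
        Real.sqrt_div (qnonneg X j)]
    simp only [h1]
    rw [Finset.mul_sum]
    have h2 : ∀ j : Fin d, (1 / Real.sqrt n) * (Real.sqrt ((Xᵀ * X) j j) / Real.sqrt n * |β j|)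
        = (Real.sqrt ((Xᵀ * X) j j) * |β j|) / n := by
      intro j
      rw [eq_div_iff hn', ← hnn]
      field_simp
      rw [Real.sqrt_sq hsn.le]
    set A := ∑ i, |(y - X.mulVec β) i| with hA
    set B := ∑ j, Real.sqrt ((Xᵀ * X) j j) * |β j| with hB
    have h3 : ∑ j, (1 / Real.sqrt n) * (Real.sqrt ((Xᵀ * X) j j) / Real.sqrt n * |β j|)
        = B / n := by
      rw [Finset.sum_congr rfl fun j _ => h2 j, ← Finset.sum_div]
    rw [h3]
    field_simp
  refine ⟨hmain, fun β => ?_⟩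
  have hK : 0 < 2 * n / Real.sqrt (y ⬝ᵥ y) := by positivity
  constructor
  · intro h γ
    have h2 := h γ
    rw [hmain β, hmain γ] at h2
    exact (mul_le_mul_iff_right₀ hK).1 h2
  · intro h γ
    rw [hmain β, hmain γ]
    exact (mul_le_mul_iff_right₀ hK).2 (h γ)
end
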